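/- arXiv:2406.00890 — 7 statements merged into one kernel-verified Lean document; each statement's English description precedes it below -/
import Mathlib

section
/- Let E be a normed additive commutative group and let u : ℂ → E be Borel measurable. Then, as an identity of extended nonnegative reals (lower Lebesgue integrals), ∫⁻_{z ∈ {z : 0 < ‖z‖ ∧ ‖z‖ ≤ 1}} (‖u z‖₊)² dA(z) = 4π² · ∫⁻_{(s,t) ∈ [0,∞) × [0,1)} (‖u (exp(-2π(s + i t)))‖₊)² · e^{-4π s} d(s,t), where dA is Lebesgue measure on ℂ ≅ ℝ² and the right-hand integral is with respect to Lebesgue measure on ℝ². -/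
open MeasureTheory Set Complex ENNReal

private lemma clm_det_mul (c : ℂ) :
    ((((1 : ℂ →L[ℂ] ℂ).smulRight c).restrictScalars ℝ) : ℂ →L[ℝ] ℂ).det = Complex.normSq c := by
  have h : ((((1 : ℂ →L[ℂ] ℂ).smulRight c).restrictScalars ℝ : ℂ →L[ℝ] ℂ) : ℂ →ₗ[ℝ] ℂ)
      = Algebra.lmul ℝ ℂ c := by
    ext x
    simp [mul_comm]
  show LinearMap.det _ = _
  rw [h, ← Algebra.norm_apply, Algebra.norm_complex_apply]

private lemma cyl_image :
    (fun w : ℂ => Complex.exp (-(2 * Real.pi) * w)) ''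
      {w : ℂ | 0 ≤ w.re ∧ 0 ≤ w.im ∧ w.im < 1} = {z : ℂ | 0 < ‖z‖ ∧ ‖z‖ ≤ 1} := by
  have hpi' := Real.pi_pos
  ext z
  constructor
  · rintro ⟨w, ⟨hre, _, _⟩, rfl⟩
    have habs : ‖Complex.exp (-(2 * Real.pi) * w)‖ = Real.exp (-(2 * Real.pi) * w.re) := by
      rw [Complex.norm_exp]
      congr 1
      simp
    refine ⟨by rw [habs]; positivity, ?_⟩
    rw [habs]
    have : -(2 * Real.pi) * w.re ≤ 0 := by nlinarith
    exact Real.exp_le_one_iff.mpr this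
  · rintro ⟨h0, h1⟩
    have hz : z ≠ 0 := by
      intro h; rw [h] at h0; simp at h0
    set w₀ : ℂ := -(Complex.log z) / ((2 * Real.pi : ℝ) : ℂ) with hw₀
    have hexp : Complex.exp (-(2 * Real.pi) * w₀) = z := by
      rw [hw₀]
      have : -(2 * Real.pi : ℂ) * (-(Complex.log z) / ((2 * Real.pi : ℝ) : ℂ)) =
          Complex.log z := by
        push_cast
        field_simp
      rw [this, Complex.exp_log hz]
    have hre : 0 ≤ w₀.re := by
      have h2 : w₀.re = -(Real.log ‖z‖) / (2 * Real.pi) := by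
        rw [hw₀, Complex.div_ofReal_re]
        simp [Complex.log_re]
      rw [h2]
      have hlog : Real.log ‖z‖ ≤ 0 :=
        Real.log_nonpos (by positivity) h1
      exact div_nonneg (by linarith) (by positivity)
    have him : w₀.im = -(Complex.arg z) / (2 * Real.pi) := by
      rw [hw₀, Complex.div_ofReal_im]
      simp [Complex.log_im]
    have harg_le := Complex.arg_le_pi z
    have harg_gt := Complex.neg_pi_lt_arg z
    by_cases hcase : 0 ≤ w₀.im
    · refine ⟨w₀, ⟨hre, hcase, ?_⟩, hexp⟩
      rw [him, div_lt_iff₀ (by positivity)]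
      nlinarith
    · refine ⟨w₀ + Complex.I, ⟨by simpa using hre, ?_, ?_⟩, ?_⟩
      · simp only [Complex.add_im, Complex.I_im]
        have h2 : (-1 : ℝ) ≤ w₀.im := by
          rw [him, le_div_iff₀ (by positivity)]
          nlinarith
        linarith
      · simp only [Complex.add_im, Complex.I_im]
        push_neg at hcase
        linarith
      · show Complex.exp (-(2 * Real.pi) * (w₀ + Complex.I)) = z
        rw [mul_add, Complex.exp_add, hexp]
        have : Complex.exp (-(2 * Real.pi) * Complex.I) = 1 := by
          rw [neg_mul, Complex.exp_neg]
          rw [show ((2 : ℂ) * Real.pi * Complex.I) = 2 * Real.pi * Complex.I by ring]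
          rw [Complex.exp_two_pi_mul_I]
          simp
        rw [this, mul_one]

private lemma cyl_injOn :
    Set.InjOn (fun w : ℂ => Complex.exp (-(2 * Real.pi) * w))
      {w : ℂ | 0 ≤ w.re ∧ 0 ≤ w.im ∧ w.im < 1} := by
  rintro w₁ ⟨_, h1, h1'⟩ w₂ ⟨_, h2, h2'⟩ heq
  rw [Complex.exp_eq_exp_iff_exists_int] at heq
  obtain ⟨n, hn⟩ := heq
  have hpi : (2 * (Real.pi : ℂ)) ≠ 0 := by
    simp [Real.pi_ne_zero]
  have hw : w₁ = w₂ - n * Complex.I := by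
    have h : -(2 * (Real.pi : ℂ)) * w₁ = -(2 * Real.pi) * (w₂ - n * Complex.I) := by
      rw [hn]; ring
    exact mul_left_cancel₀ (by simpa using hpi) h
  have him : w₁.im = w₂.im - n := by
    rw [hw]; simp
  have hn0 : n = 0 := by
    have ha : (-1 : ℝ) < n := by linarith
    have hb : (n : ℝ) < 1 := by linarith
    have ha' : (-1 : ℤ) < n := by exact_mod_cast ha
    have hb' : (n : ℤ) < 1 := by exact_mod_cast hb
    omega
  rw [hw, hn0]
  simp

/-- Change of variables to holomorphic polar coordinates `(s,t) ↦ e^{-2π(s+it)}`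
on the punctured unit disk:
`∫_D |u₀|² dxdy = 4π² ∫_{[0,∞)×[0,1)} |u∞(s,t)|² e^{-4πs} dsdt`. -/
theorem lintegral_sq_disk_eq_cylinder {E : Type*} [NormedAddCommGroup E]
    [MeasurableSpace E] [BorelSpace E]
    (u : ℂ → E) (hu : Measurable u) :
    (∫⁻ z in {z : ℂ | 0 < ‖z‖ ∧ ‖z‖ ≤ 1}, (‖u z‖₊ : ℝ≥0∞) ^ 2) =
      ENNReal.ofReal (4 * Real.pi ^ 2) *
        ∫⁻ p in Set.Ici (0 : ℝ) ×ˢ Set.Ico (0 : ℝ) 1,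
          (‖u (Complex.exp (-(2 * Real.pi) * ((p.1 : ℂ) + (p.2 : ℂ) * Complex.I)))‖₊ : ℝ≥0∞) ^ 2 *
            ENNReal.ofReal (Real.exp (-(4 * Real.pi) * p.1)) := by
  have hpi' := Real.pi_pos
  set f : ℂ → ℂ := fun w => Complex.exp (-(2 * Real.pi) * w) with hf
  set S : Set ℂ := {w : ℂ | 0 ≤ w.re ∧ 0 ≤ w.im ∧ w.im < 1} with hS
  set f' : ℂ → ℂ →L[ℝ] ℂ := fun w =>
    ((1 : ℂ →L[ℂ] ℂ).smulRight ((-(2 * Real.pi) : ℂ) * Complex.exp (-(2 * Real.pi) * w))).restrictScalars ℝ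
    with hf'
  have hSmeas : MeasurableSet S := by
    have : S = Complex.measurableEquivRealProd ⁻¹' (Set.Ici (0 : ℝ) ×ˢ Set.Ico (0 : ℝ) 1) := by
      ext w
      simp [hS, Complex.measurableEquivRealProd_apply, Set.mem_Ico, and_assoc]
    rw [this]
    exact Complex.measurableEquivRealProd.measurable (measurableSet_Ici.prod measurableSet_Ico)
  have hderiv : ∀ w ∈ S, HasFDerivWithinAt f (f' w) S w := by
    intro w _
    apply HasFDerivAt.hasFDerivWithinAt
    have h : HasDerivAt f ((-(2 * Real.pi) : ℂ) * Complex.exp (-(2 * Real.pi) * w)) w := by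
      have h0 := ((hasDerivAt_id w).const_mul (-(2 * Real.pi) : ℂ)).cexp
      rw [hf]
      simpa [id_eq, mul_comm] using h0
    exact (h.hasFDerivAt).restrictScalars ℝ
  have key := lintegral_image_eq_lintegral_abs_det_fderiv_mul volume hSmeas hderiv cyl_injOn
    (fun z => (‖u z‖₊ : ℝ≥0∞) ^ 2)
  rw [show f '' S = {z : ℂ | 0 < ‖z‖ ∧ ‖z‖ ≤ 1} from cyl_image] at key
  rw [key]
  have hdet : ∀ w : ℂ, ENNReal.ofReal |(f' w).det| =
      ENNReal.ofReal (4 * Real.pi ^ 2) * ENNReal.ofReal (Real.exp (-(4 * Real.pi) * w.re)) := by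
    intro w
    rw [hf', clm_det_mul]
    have h1 : Complex.normSq ((-(2 * Real.pi) : ℂ) * Complex.exp (-(2 * Real.pi) * w)) =
        4 * Real.pi ^ 2 * Real.exp (-(4 * Real.pi) * w.re) := by
      rw [Complex.normSq_mul]
      have h2 : Complex.normSq ((-(2 * Real.pi) : ℂ)) = 4 * Real.pi ^ 2 := by
        rw [show ((-(2 * Real.pi)) : ℂ) = ((-(2 * Real.pi) : ℝ) : ℂ) by push_cast; ring,
          Complex.normSq_ofReal]
        ring
      have h3 : Complex.normSq (Complex.exp (-(2 * Real.pi) * w)) =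
          Real.exp (-(4 * Real.pi) * w.re) := by
        rw [Complex.normSq_eq_norm_sq, Complex.norm_exp]
        rw [← Real.exp_nat_mul]
        congr 1
        simp
        ring
      rw [h2, h3]
    rw [h1, _root_.abs_of_nonneg (by positivity), ENNReal.ofReal_mul (by positivity)]
  calc ∫⁻ w in S, ENNReal.ofReal |(f' w).det| * (‖u (f w)‖₊ : ℝ≥0∞) ^ 2
      = ∫⁻ w in S, ENNReal.ofReal (4 * Real.pi ^ 2) *
          ((‖u (f w)‖₊ : ℝ≥0∞) ^ 2 * ENNReal.ofReal (Real.exp (-(4 * Real.pi) * w.re))) := by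
        congr 1
        ext w
        rw [hdet w]
        ring
    _ = ENNReal.ofReal (4 * Real.pi ^ 2) *
          ∫⁻ w in S, (‖u (f w)‖₊ : ℝ≥0∞) ^ 2 * ENNReal.ofReal (Real.exp (-(4 * Real.pi) * w.re)) := by
        rw [lintegral_const_mul' _ _ ENNReal.ofReal_ne_top]
    _ = ENNReal.ofReal (4 * Real.pi ^ 2) *
        ∫⁻ p in Set.Ici (0 : ℝ) ×ˢ Set.Ico (0 : ℝ) 1,
          (‖u (Complex.exp (-(2 * Real.pi) * ((p.1 : ℂ) + (p.2 : ℂ) * Complex.I)))‖₊ : ℝ≥0∞) ^ 2 *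
            ENNReal.ofReal (Real.exp (-(4 * Real.pi) * p.1)) := by
        congr 1
        have := Complex.volume_preserving_equiv_real_prod.setLIntegral_comp_preimage_emb
          Complex.measurableEquivRealProd.measurableEmbedding
          (fun p : ℝ × ℝ =>
            (‖u (Complex.exp (-(2 * Real.pi) * ((p.1 : ℂ) + (p.2 : ℂ) * Complex.I)))‖₊ : ℝ≥0∞) ^ 2 *
              ENNReal.ofReal (Real.exp (-(4 * Real.pi) * p.1)))
          (Set.Ici (0 : ℝ) ×ˢ Set.Ico (0 : ℝ) 1)
        rw [← this]
        have hpre : Complex.measurableEquivRealProd ⁻¹' (Set.Ici (0 : ℝ) ×ˢ Set.Ico (0 : ℝ) 1) = S := by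
          ext w
          simp [hS, Complex.measurableEquivRealProd_apply, Set.mem_Ico, and_assoc]
        rw [hpre]
        apply setLIntegral_congr_fun hSmeas
        intro w _
        simp only [Complex.measurableEquivRealProd_apply, hf]
        rw [Complex.re_add_im]
end

section
/- Let E be a normed additive commutative group and let u : ℂ → E be Borel measurable. Then, as an identity of extended nonnegative reals, ∫⁻_{(s,t) ∈ [0,∞) × [0,1)} (‖u (exp(-2π(s + i t)))‖₊)² d(s,t) = (4π²)⁻¹ · ∫⁻_{z ∈ {z : 0 < ‖z‖ ∧ ‖z‖ ≤ 1}} ‖z‖⁻² · (‖u z‖₊)² dA(z), where dA is Lebesgue measure on ℂ ≅ ℝ² and the left-hand integral is with respect to Lebesgue measure on ℝ². -/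
open MeasureTheory Set Complex ENNReal

private lemma det_mul_clm (c : ℂ) :
    (((1 : ℂ →L[ℂ] ℂ).smulRight c).restrictScalars ℝ).det = Complex.normSq c := by
  have h : ((((1 : ℂ →L[ℂ] ℂ).smulRight c).restrictScalars ℝ : ℂ →L[ℝ] ℂ) : ℂ →ₗ[ℝ] ℂ)
      = Algebra.lmul ℝ ℂ c := by
    ext z; simp [mul_comm]
  rw [ContinuousLinearMap.det, h, ← Algebra.norm_apply, Algebra.norm_complex_apply]

private lemma exists_cyl_preimage (w : ℂ) (hw0 : 0 < ‖w‖) (hw1 : ‖w‖ ≤ 1) :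
    ∃ z : ℂ, (0 ≤ z.re ∧ 0 ≤ z.im ∧ z.im < 1) ∧
      Complex.exp (-(2 * (Real.pi : ℂ)) * z) = w := by
  have hπ : (0:ℝ) < Real.pi := Real.pi_pos
  have hπc : (Real.pi : ℂ) ≠ 0 := Complex.ofReal_ne_zero.2 Real.pi_ne_zero
  have habs : (0:ℝ) < ‖w‖ := by exact hw0
  have habs1 : ‖w‖ ≤ 1 := by exact hw1
  have hlog : Real.log ‖w‖ ≤ 0 := Real.log_nonpos habs.le habs1
  have hθ1 : -Real.pi < Complex.arg w := Complex.neg_pi_lt_arg w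
  have hθ2 : Complex.arg w ≤ Real.pi := Complex.arg_le_pi w
  set r : ℝ := ‖w‖ with hr
  set θ : ℝ := Complex.arg w with hθ
  have hre : ∀ x y : ℝ, ((x:ℂ) + (y:ℂ) * Complex.I).re = x := by intro x y; simp
  have him : ∀ x y : ℝ, ((x:ℂ) + (y:ℂ) * Complex.I).im = y := by intro x y; simp
  have hs : (0:ℝ) ≤ -Real.log r / (2 * Real.pi) :=
    div_nonneg (by linarith) (by positivity)
  have hexp : ∀ t : ℝ, Complex.exp (-(2 * (Real.pi : ℂ)) *
      ((↑(-Real.log r / (2 * Real.pi)) : ℂ) + (t : ℂ) * Complex.I))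
      = (r : ℂ) * Complex.exp ((↑(-(2 * Real.pi) * t) : ℂ) * Complex.I) := by
    intro t
    have h1 : -(2 * (Real.pi : ℂ)) * ((↑(-Real.log r / (2 * Real.pi)) : ℂ) + (t : ℂ) * Complex.I)
        = (↑(Real.log r) : ℂ) + (↑(-(2 * Real.pi) * t) : ℂ) * Complex.I := by
      push_cast
      field_simp
      ring
    rw [h1, Complex.exp_add, ← Complex.ofReal_exp, Real.exp_log habs]
  by_cases h : 0 < θ
  · refine ⟨(↑(-Real.log r / (2 * Real.pi)) : ℂ) + (↑(1 - θ / (2 * Real.pi)) : ℂ) * Complex.I,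
      ⟨by rw [hre]; exact hs, ?_, ?_⟩, ?_⟩
    · rw [him]
      have : θ / (2 * Real.pi) ≤ 1 := by
        rw [div_le_one (by positivity)]; linarith
      linarith
    · rw [him]
      have : 0 < θ / (2 * Real.pi) := by positivity
      linarith
    · rw [hexp]
      have h3 : -(2 * Real.pi) * (1 - θ / (2 * Real.pi)) = θ - 2 * Real.pi := by
        field_simp
        ring
      rw [h3]
      have h4 : ((↑(θ - 2 * Real.pi) : ℂ)) * Complex.I
          = (θ : ℂ) * Complex.I - 2 * (Real.pi : ℂ) * Complex.I := by push_cast; ring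
      rw [h4, Complex.exp_sub, Complex.exp_two_pi_mul_I, div_one]
      exact Complex.norm_mul_exp_arg_mul_I w
  · push_neg at h
    refine ⟨(↑(-Real.log r / (2 * Real.pi)) : ℂ) + (↑(-θ / (2 * Real.pi)) : ℂ) * Complex.I,
      ⟨by rw [hre]; exact hs, ?_, ?_⟩, ?_⟩
    · rw [him]
      exact div_nonneg (by linarith) (by positivity)
    · rw [him]
      rw [div_lt_one (by positivity)]; linarith
    · rw [hexp]
      have h3 : -(2 * Real.pi) * (-θ / (2 * Real.pi)) = θ := by field_simp
      rw [h3]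
      exact Complex.norm_mul_exp_arg_mul_I w

/-- Change of variables to holomorphic polar coordinates `(s,t) ↦ e^{-2π(s+it)}`:
`∫_{[0,∞)×[0,1)} |u∞(s,t)|² dsdt = (4π²)⁻¹ ∫_D |z|⁻² |u₀|² dxdy`. -/
theorem lintegral_sq_cylinder_eq_disk_weighted {E : Type*} [NormedAddCommGroup E]
    [MeasurableSpace E] [BorelSpace E]
    (u : ℂ → E) (hu : Measurable u) :
    (∫⁻ p in Set.Ici (0 : ℝ) ×ˢ Set.Ico (0 : ℝ) 1,
        (‖u (Complex.exp (-(2 * Real.pi) * ((p.1 : ℂ) + (p.2 : ℂ) * Complex.I)))‖₊ : ℝ≥0∞) ^ 2) =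
      (ENNReal.ofReal (4 * Real.pi ^ 2))⁻¹ *
        ∫⁻ z in {z : ℂ | 0 < ‖z‖ ∧ ‖z‖ ≤ 1},
          ((‖z‖₊ : ℝ≥0∞) ^ 2)⁻¹ * (‖u z‖₊ : ℝ≥0∞) ^ 2 := by
  set a : ℂ := -(2 * (Real.pi : ℂ)) with ha_def
  have ha : a ≠ 0 := by
    simp [ha_def, Complex.ofReal_ne_zero, Real.pi_ne_zero]
  set G : ℂ → ℂ := fun z => Complex.exp (a * z) with hG_def
  set S : Set (ℝ × ℝ) := Set.Ici (0:ℝ) ×ˢ Set.Ico (0:ℝ) 1 with hS_def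
  set T : Set ℂ := Complex.measurableEquivRealProd ⁻¹' S with hT_def
  have hS : MeasurableSet S := measurableSet_Ici.prod measurableSet_Ico
  have hT : MeasurableSet T := Complex.measurableEquivRealProd.measurable hS
  have hTmem : ∀ z : ℂ, z ∈ T ↔ 0 ≤ z.re ∧ 0 ≤ z.im ∧ z.im < 1 := by
    intro z
    simp [hT_def, hS_def, Complex.measurableEquivRealProd_apply, Set.mem_Ici, Set.mem_Ico,
      and_assoc]
  have haz_re : ∀ z : ℂ, (a * z).re = -(2 * Real.pi) * z.re := by
    intro z
    simp [ha_def, Complex.mul_re]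
  -- Step 1: transfer the cylinder integral to ℂ
  have hcont : Continuous fun p : ℝ × ℝ =>
      Complex.exp (a * ((p.1 : ℂ) + (p.2 : ℂ) * Complex.I)) := by fun_prop
  have hmf : Measurable fun p : ℝ × ℝ =>
      ((‖u (Complex.exp (a * ((p.1 : ℂ) + (p.2 : ℂ) * Complex.I)))‖₊ : ℝ≥0∞) ^ 2) :=
    ((hu.comp hcont.measurable).nnnorm.coe_nnreal_ennreal).pow_const 2
  have step1 : (∫⁻ p in S,
        ((‖u (Complex.exp (a * ((p.1 : ℂ) + (p.2 : ℂ) * Complex.I)))‖₊ : ℝ≥0∞) ^ 2))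
      = ∫⁻ z in T, ((‖u (G z)‖₊ : ℝ≥0∞) ^ 2) := by
    rw [← Complex.volume_preserving_equiv_real_prod.setLIntegral_comp_preimage hS hmf]
    exact lintegral_congr fun z => by
      simp [Complex.measurableEquivRealProd_apply, Complex.re_add_im, hG_def]
  -- derivative
  set f' : ℂ → ℂ →L[ℝ] ℂ :=
    fun z => ((1 : ℂ →L[ℂ] ℂ).smulRight (Complex.exp (a * z) * a)).restrictScalars ℝ with hf'_def
  have hderiv : ∀ z ∈ T, HasFDerivWithinAt G (f' z) T z := by
    intro z _
    have hd : HasDerivAt G (Complex.exp (a * z) * a) z := by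
      simpa [hG_def] using ((hasDerivAt_id z).const_mul a).cexp
    exact (hd.hasFDerivAt.restrictScalars ℝ).hasFDerivWithinAt
  -- injectivity
  have hinj : Set.InjOn G T := by
    intro z hz w hw h
    rw [hTmem] at hz hw
    obtain ⟨n, hn⟩ := Complex.exp_eq_exp_iff_exists_int.1 h
    have h2 : a * (z - w) = n * (2 * Real.pi * Complex.I) := by
      rw [mul_sub, hn]; ring
    have h3 : z - w = (-n) * Complex.I := by
      apply mul_left_cancel₀ ha
      rw [h2, ha_def]; push_cast; ring
    have him : z.im - w.im = -n := by
      have := congrArg Complex.im h3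
      simpa [Complex.sub_im, Complex.mul_im] using this
    have hn0 : n = 0 := by
      have h4 : |(n : ℝ)| < 1 := by
        rw [abs_lt]
        constructor <;> nlinarith [hz.2.1, hz.2.2, hw.2.1, hw.2.2]
      have h5l : (-1 : ℤ) < n := by exact_mod_cast (abs_lt.mp h4).1
      have h5r : n < (1 : ℤ) := by exact_mod_cast (abs_lt.mp h4).2
      omega
    have : z - w = 0 := by rw [h3, hn0]; simp
    exact sub_eq_zero.mp this
  -- image
  have himg : G '' T = {z : ℂ | 0 < ‖z‖ ∧ ‖z‖ ≤ 1} := by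
    ext w
    constructor
    · rintro ⟨z, hz, rfl⟩
      rw [hTmem] at hz
      have hnorm : ‖G z‖ = Real.exp (-(2 * Real.pi) * z.re) := by
        rw [hG_def]
        simp only
        rw [Complex.norm_exp, haz_re]
      refine ⟨by rw [hnorm]; exact Real.exp_pos _, ?_⟩
      rw [hnorm]
      have h1 : -(2 * Real.pi) * z.re ≤ 0 := by nlinarith [Real.pi_pos, hz.1]
      calc Real.exp (-(2 * Real.pi) * z.re) ≤ Real.exp 0 := Real.exp_le_exp.2 h1
        _ = 1 := Real.exp_zero
    · rintro ⟨hw0, hw1⟩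
      obtain ⟨z, hzT, hze⟩ := exists_cyl_preimage w hw0 hw1
      exact ⟨z, (hTmem z).2 hzT, hze⟩
  -- Jacobian change of variables
  have key := lintegral_image_eq_lintegral_abs_det_fderiv_mul volume hT hderiv hinj
    (fun z => ((‖z‖₊ : ℝ≥0∞) ^ 2)⁻¹ * (‖u z‖₊ : ℝ≥0∞) ^ 2)
  rw [himg] at key
  -- pointwise computation of the weighted jacobian
  have hpoint : ∀ z : ℂ, ENNReal.ofReal |(f' z).det| *
      (((‖G z‖₊ : ℝ≥0∞) ^ 2)⁻¹ * (‖u (G z)‖₊ : ℝ≥0∞) ^ 2)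
      = ENNReal.ofReal (4 * Real.pi ^ 2) * (‖u (G z)‖₊ : ℝ≥0∞) ^ 2 := by
    intro z
    set R : ℝ := Real.exp (-(2 * Real.pi) * z.re) with hR
    have hR0 : 0 < R := Real.exp_pos _
    have habsG : ‖Complex.exp (a * z)‖ = R := by
      rw [Complex.norm_exp, haz_re]
    have hnormSq_a : Complex.normSq a = 4 * Real.pi ^ 2 := by
      simp [ha_def, Complex.normSq_apply]
      try ring
    have hdet : (f' z).det = R ^ 2 * (4 * Real.pi ^ 2) := by
      rw [hf'_def]
      simp only
      rw [det_mul_clm, map_mul, hnormSq_a, Complex.normSq_eq_norm_sq, habsG]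
    have hdet_abs : |(f' z).det| = R ^ 2 * (4 * Real.pi ^ 2) := by
      rw [hdet, abs_of_pos (by positivity)]
    have hnnG : (‖G z‖₊ : ℝ≥0∞) = ENNReal.ofReal R := by
      have hnG : ‖G z‖ = R := by
        rw [hG_def]
        simp only
        rw [habsG]
      rw [← enorm_eq_nnnorm, ← ofReal_norm_eq_enorm, hnG]
    have hne0 : ENNReal.ofReal (R ^ 2) ≠ 0 := (ENNReal.ofReal_pos.2 (by positivity)).ne'
    rw [hdet_abs, hnnG, ← ENNReal.ofReal_pow hR0.le,
      ENNReal.ofReal_mul (by positivity)]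
    rw [show ENNReal.ofReal (R ^ 2) * ENNReal.ofReal (4 * Real.pi ^ 2) *
        ((ENNReal.ofReal (R ^ 2))⁻¹ * (‖u (G z)‖₊ : ℝ≥0∞) ^ 2)
        = (ENNReal.ofReal (R ^ 2) * (ENNReal.ofReal (R ^ 2))⁻¹) *
          (ENNReal.ofReal (4 * Real.pi ^ 2) * (‖u (G z)‖₊ : ℝ≥0∞) ^ 2) from by ring,
      ENNReal.mul_inv_cancel hne0 ENNReal.ofReal_ne_top, one_mul]
  have key2 : (∫⁻ z in {z : ℂ | 0 < ‖z‖ ∧ ‖z‖ ≤ 1},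
        ((‖z‖₊ : ℝ≥0∞) ^ 2)⁻¹ * (‖u z‖₊ : ℝ≥0∞) ^ 2)
      = ENNReal.ofReal (4 * Real.pi ^ 2) * ∫⁻ z in T, ((‖u (G z)‖₊ : ℝ≥0∞) ^ 2) := by
    rw [key, lintegral_congr hpoint, lintegral_const_mul' _ _ ENNReal.ofReal_ne_top]
  have hc0 : ENNReal.ofReal (4 * Real.pi ^ 2) ≠ 0 :=
    (ENNReal.ofReal_pos.2 (by positivity)).ne'
  rw [step1, key2, ← mul_assoc, ENNReal.inv_mul_cancel hc0 ENNReal.ofReal_ne_top, one_mul]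
end

section
/- Let E be a normed additive commutative group, u : ℂ → E Borel measurable, and α ∈ ℝ. Then, as an identity of extended nonnegative reals, ∫⁻_{(s,t) ∈ [0,∞) × [0,1)} (‖u (exp(-2π(s + i t)))‖₊)² · e^{α s} d(s,t) = (4π²)⁻¹ · ∫⁻_{z ∈ {z : 0 < ‖z‖ ∧ ‖z‖ ≤ 1}} (‖u z‖₊)² · ‖z‖^{-α/(2π) - 2} dA(z), where dA is Lebesgue measure on ℂ ≅ ℝ². -/
open MeasureTheory Set Complex ENNReal

lemma det_restrictScalars_smulRight (d : ℂ) :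
    (((1 : ℂ →L[ℂ] ℂ).smulRight d).restrictScalars ℝ).det = Complex.normSq d := by
  rw [ContinuousLinearMap.det, ← LinearMap.det_toMatrix Complex.basisOneI, Matrix.det_fin_two]
  simp [LinearMap.toMatrix_apply, Complex.coe_basisOneI_repr, Complex.coe_basisOneI,
    Complex.normSq_apply]

/-- Weighted change of variables to holomorphic polar coordinates
`(s,t) ↦ e^{-2π(s+it)}`: for any real `α`,
`∫_{[0,∞)×[0,1)} |u∞(s,t)|² e^{αs} dsdt
   = (4π²)⁻¹ ∫_D |u₀(z)|² |z|^{-α/(2π)-2} dxdy`. -/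
theorem lintegral_sq_cylinder_weighted_eq_disk {E : Type*} [NormedAddCommGroup E]
    [MeasurableSpace E] [BorelSpace E]
    (u : ℂ → E) (hu : Measurable u) (α : ℝ) :
    (∫⁻ p in Set.Ici (0 : ℝ) ×ˢ Set.Ico (0 : ℝ) 1,
        (‖u (Complex.exp (-(2 * Real.pi) * ((p.1 : ℂ) + (p.2 : ℂ) * Complex.I)))‖₊ : ℝ≥0∞) ^ 2 *
          ENNReal.ofReal (Real.exp (α * p.1))) =
      (ENNReal.ofReal (4 * Real.pi ^ 2))⁻¹ *
        ∫⁻ z in {z : ℂ | 0 < ‖z‖ ∧ ‖z‖ ≤ 1},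
          (‖u z‖₊ : ℝ≥0∞) ^ 2 *
            ENNReal.ofReal (‖z‖ ^ (-α / (2 * Real.pi) - 2)) := by
  have pi_pos := Real.pi_pos
  set c : ℂ := -(2 * Real.pi) with hc
  set f : ℂ → ℂ := fun w => Complex.exp (c * w) with hfdef
  set S : Set ℂ := {w : ℂ | 0 ≤ w.re ∧ w.im ∈ Set.Ico (0:ℝ) 1} with hSdef
  have hSeq : Complex.measurableEquivRealProd ⁻¹' (Set.Ici (0:ℝ) ×ˢ Set.Ico (0:ℝ) 1) = S := by
    ext w; simp [hSdef, Complex.measurableEquivRealProd_apply, Set.mem_prod]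
  have hS : MeasurableSet S := by
    rw [← hSeq]
    exact Complex.measurableEquivRealProd.measurable (measurableSet_Ici.prod measurableSet_Ico)
  set f' : ℂ → (ℂ →L[ℝ] ℂ) :=
    fun w => ((1 : ℂ →L[ℂ] ℂ).smulRight (c * Complex.exp (c * w))).restrictScalars ℝ with hf'def
  have hder : ∀ w ∈ S, HasFDerivWithinAt f (f' w) S w := by
    intro w _
    have h1 : HasDerivAt f (c * Complex.exp (c * w)) w := by
      have h2 := ((hasDerivAt_id w).const_mul c).cexp
      simp only [id_eq, mul_one] at h2
      rw [mul_comm]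
      exact h2
    exact (h1.hasFDerivAt.restrictScalars ℝ).hasFDerivWithinAt
  have hre : ∀ w : ℂ, (c * w).re = -(2 * Real.pi) * w.re := by
    intro w; simp [hc, Complex.mul_re]
  have hcne : (2 * Real.pi : ℝ) ≠ 0 := by positivity
  have hinj : Set.InjOn f S := by
    intro w1 h1 w2 h2 he
    rw [hfdef] at he
    simp only at he
    rw [Complex.exp_eq_exp_iff_exists_int] at he
    obtain ⟨n, hn⟩ := he
    have hc0 : c ≠ 0 := by
      simp only [hc, neg_ne_zero]
      exact_mod_cast (mul_ne_zero two_ne_zero (Complex.ofReal_ne_zero.2 Real.pi_ne_zero))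
    have hw : w1 = w2 + (n : ℂ) * (-Complex.I) := by
      apply mul_left_cancel₀ hc0
      rw [hn]; rw [hc]; push_cast; ring
    have him : w1.im = w2.im - n := by
      rw [hw]; simp; ring
    have hn0 : n = 0 := by
      have h1' := h1.2; have h2' := h2.2
      have : |(n : ℝ)| < 1 := by
        rw [abs_lt]
        constructor <;> [nlinarith [h1'.1, h1'.2, h2'.1, h2'.2, him]; nlinarith [h1'.1, h1'.2, h2'.1, h2'.2, him]]
      have h3 : |n| < 1 := by exact_mod_cast this
      have h4 := abs_lt.mp h3
      omega
    rw [hw, hn0]; simp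
  have himg : f '' S = {z : ℂ | 0 < ‖z‖ ∧ ‖z‖ ≤ 1} := by
    ext z
    constructor
    · rintro ⟨w, hw, rfl⟩
      have h1 : ‖f w‖ = Real.exp ((c * w).re) := by
        simp [hfdef, Complex.norm_exp]
      constructor
      · rw [h1]; exact Real.exp_pos _
      · rw [h1, hre]
        exact Real.exp_le_one_iff.mpr (by nlinarith [hw.1])
    · rintro ⟨hz0, hz1⟩
      have hz : z ≠ 0 := by
        intro h; rw [h] at hz0; simp at hz0
      set θ := Complex.arg z with hθ
      have hθ1 : -Real.pi < θ := Complex.neg_pi_lt_arg z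
      have hθ2 : θ ≤ Real.pi := Complex.arg_le_pi z
      set s : ℝ := -(Real.log ‖z‖) / (2 * Real.pi) with hs
      set t : ℝ := if θ ≤ 0 then -θ / (2 * Real.pi) else 1 - θ / (2 * Real.pi) with ht
      refine ⟨(s : ℂ) + (t : ℂ) * Complex.I, ⟨?_, ?_, ?_⟩, ?_⟩
      · simp only [Complex.add_re, Complex.ofReal_re, Complex.mul_I_re, Complex.ofReal_im,
          neg_zero, add_zero]
        apply div_nonneg _ (by positivity)
        simp only [neg_nonneg]
        exact Real.log_nonpos (le_of_lt hz0) hz1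
      · simp only [Complex.add_im, Complex.ofReal_im, Complex.mul_I_im, Complex.ofReal_re,
          zero_add, ht]
        split_ifs with h
        · exact div_nonneg (by linarith) (by positivity)
        · push_neg at h
          have : θ / (2 * Real.pi) < 1 := by
            rw [div_lt_one (by positivity)]; linarith
          linarith
      · simp only [Complex.add_im, Complex.ofReal_im, Complex.mul_I_im, Complex.ofReal_re,
          zero_add, ht]
        split_ifs with h
        · rw [div_lt_one (by positivity)]; linarith
        · push_neg at h
          have : 0 < θ / (2 * Real.pi) := by positivity
          linarith
      · -- f (s + t I) = z
        have hlog : Complex.log z = (Real.log ‖z‖ : ℂ) + (θ : ℂ) * Complex.I := by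
          apply Complex.ext <;>
            simp [Complex.log_re, Complex.log_im, hθ]
        have hls : (-(2 * Real.pi)) * s = Real.log ‖z‖ := by
          rw [hs]; field_simp
        have hcs : c * ((s : ℂ) + (t : ℂ) * Complex.I)
            = (Real.log ‖z‖ : ℂ) + ((-(2 * Real.pi) * t : ℝ) : ℂ) * Complex.I := by
          rw [← hls, hc]; push_cast; ring
        rw [hfdef]
        simp only
        rw [hcs]
        split_ifs at ht with h
        · have : (-(2 * Real.pi) * t : ℝ) = θ := by rw [ht]; field_simp
          rw [this, ← hlog, Complex.exp_log hz]
        · have : (-(2 * Real.pi) * t : ℝ) = θ - 2 * Real.pi := by rw [ht]; field_simp; ring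
          rw [this]
          have : ((θ - 2 * Real.pi : ℝ) : ℂ) * Complex.I
              = (θ : ℂ) * Complex.I - 2 * Real.pi * Complex.I := by push_cast; ring
          rw [this]
          rw [show (Real.log ‖z‖ : ℂ) + ((θ : ℂ) * Complex.I - 2 * Real.pi * Complex.I)
              = ((Real.log ‖z‖ : ℂ) + (θ : ℂ) * Complex.I) - 2 * Real.pi * Complex.I by ring]
          rw [Complex.exp_sub, Complex.exp_two_pi_mul_I, div_one, ← hlog, Complex.exp_log hz]
  have key := lintegral_image_eq_lintegral_abs_det_fderiv_mul (μ := volume) hS hder hinj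
    (fun z => (‖u z‖₊ : ℝ≥0∞) ^ 2 * ENNReal.ofReal (‖z‖ ^ (-α / (2 * Real.pi) - 2)))
  rw [himg] at key
  rw [key]
  have hpoint : ∀ w : ℂ, ENNReal.ofReal |(f' w).det| *
      ((‖u (f w)‖₊ : ℝ≥0∞) ^ 2 * ENNReal.ofReal (‖f w‖ ^ (-α / (2 * Real.pi) - 2)))
      = ENNReal.ofReal (4 * Real.pi ^ 2) *
        ((‖u (f w)‖₊ : ℝ≥0∞) ^ 2 * ENNReal.ofReal (Real.exp (α * w.re))) := by
    intro w
    have ha : ‖Complex.exp (c * w)‖ = Real.exp (-(2 * Real.pi) * w.re) := by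
      rw [Complex.norm_exp, hre]
    have hnorm : ‖f w‖ = Real.exp (-(2 * Real.pi) * w.re) := by
      rw [hfdef]; simpa using ha
    have habsc : ‖c‖ = 2 * Real.pi := by
      rw [hc]
      rw [show (-(2 * (Real.pi : ℂ))) = ((-(2 * Real.pi) : ℝ) : ℂ) by push_cast; ring]
      rw [Complex.norm_real, Real.norm_eq_abs, abs_of_neg (neg_neg_of_pos (by positivity))]
      ring
    have hdet : (f' w).det
        = 4 * Real.pi ^ 2 * Real.exp (-(2 * Real.pi) * w.re + -(2 * Real.pi) * w.re) := by
      rw [hf'def]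
      simp only
      rw [det_restrictScalars_smulRight, map_mul, ← Complex.sq_norm, ← Complex.sq_norm, ha, habsc]
      rw [sq (Real.exp _), ← Real.exp_add]
      ring
    have hpow : ‖f w‖ ^ (-α / (2 * Real.pi) - 2)
        = Real.exp ((-(2 * Real.pi) * w.re) * (-α / (2 * Real.pi) - 2)) := by
      rw [hnorm]; exact (Real.exp_mul _ _).symm
    have harg : (-(2 * Real.pi) * w.re + -(2 * Real.pi) * w.re)
        + (-(2 * Real.pi) * w.re) * (-α / (2 * Real.pi) - 2) = α * w.re := by
      field_simp
      ring
    rw [hpow, hdet, abs_of_pos (by positivity), mul_left_comm,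
      ← ENNReal.ofReal_mul (by positivity),
      show 4 * Real.pi ^ 2 * Real.exp (-(2 * Real.pi) * w.re + -(2 * Real.pi) * w.re) *
          Real.exp (-(2 * Real.pi) * w.re * (-α / (2 * Real.pi) - 2))
        = 4 * Real.pi ^ 2 * Real.exp (α * w.re) by
          rw [mul_assoc, ← Real.exp_add, harg],
      ENNReal.ofReal_mul (by positivity), mul_left_comm]
  have hsplit : (∫⁻ w in S, ENNReal.ofReal |(f' w).det| *
        ((‖u (f w)‖₊ : ℝ≥0∞) ^ 2 * ENNReal.ofReal (‖f w‖ ^ (-α / (2 * Real.pi) - 2))))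
      = ENNReal.ofReal (4 * Real.pi ^ 2) *
        ∫⁻ w in S, (‖u (f w)‖₊ : ℝ≥0∞) ^ 2 * ENNReal.ofReal (Real.exp (α * w.re)) := by
    rw [← lintegral_const_mul' _ _ ENNReal.ofReal_ne_top]
    exact lintegral_congr fun w => hpoint w
  rw [hsplit, ← mul_assoc,
    ENNReal.inv_mul_cancel (ENNReal.ofReal_pos.mpr (by positivity)).ne' ENNReal.ofReal_ne_top,
    one_mul]
  have htrans := (Complex.volume_preserving_equiv_real_prod).setLIntegral_comp_preimage_emb
    Complex.measurableEquivRealProd.measurableEmbedding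
    (fun p : ℝ × ℝ =>
      (‖u (Complex.exp (-(2 * Real.pi) * ((p.1 : ℂ) + (p.2 : ℂ) * Complex.I)))‖₊ : ℝ≥0∞) ^ 2 *
        ENNReal.ofReal (Real.exp (α * p.1)))
    (Set.Ici (0 : ℝ) ×ˢ Set.Ico (0 : ℝ) 1)
  rw [← htrans, hSeq]
  refine lintegral_congr fun w => ?_
  simp only [Complex.measurableEquivRealProd_apply]
  rw [show ((w.re : ℂ) + (w.im : ℂ) * Complex.I) = w from Complex.re_add_im w]
end

section
/- Let E be a normed additive commutative group, u : ℂ → E Borel measurable, and δ > 0. If ∫⁻_{(s,t) ∈ [0,∞) × [0,1)} (‖u (exp(-2π(s + i t)))‖₊)² · e^{2δ s} d(s,t) < ∞, then ∫⁻_{z ∈ {z : 0 < ‖z‖ ∧ ‖z‖ ≤ 1}} (‖u z‖₊)² dA(z) < ∞, where dA is Lebesgue measure on ℂ ≅ ℝ². -/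
open MeasureTheory Set Complex ENNReal

lemma det_complex_smul_one (a : ℂ) :
    ContinuousLinearMap.det (a • (1 : ℂ →L[ℝ] ℂ)) = Complex.normSq a := by
  have h : ((a • (1 : ℂ →L[ℝ] ℂ) : ℂ →L[ℝ] ℂ) : ℂ →ₗ[ℝ] ℂ) = a • (1 : ℂ →ₗ[ℝ] ℂ) := rfl
  rw [ContinuousLinearMap.det, h, ← LinearMap.det_toMatrix Complex.basisOneI,
    Matrix.det_fin_two]
  simp [LinearMap.toMatrix_apply, Complex.coe_basisOneI_repr, Complex.coe_basisOneI,
    Complex.normSq_apply]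

lemma hasFDerivAt_exp_const_mul (c w : ℂ) :
    HasFDerivAt (fun z : ℂ => Complex.exp (c * z))
      ((c * Complex.exp (c * w)) • (1 : ℂ →L[ℝ] ℂ)) w := by
  have h1 : HasDerivAt (fun z : ℂ => Complex.exp (c * z)) (Complex.exp (c * w) * (c * 1)) w :=
    (Complex.hasDerivAt_exp (c * w)).comp w ((hasDerivAt_id w).const_mul c)
  have h2 := h1.hasFDerivAt.restrictScalars ℝ
  convert h2 using 1
  case e'_8 => rfl
  case e'_4 => rfl
  ext z
  simp
  ring

/-- If `u∞ ∈ L²_δ` on the half-cylinder for some `δ > 0`, then `u₀ ∈ L²` on the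
punctured unit disk. -/
theorem lintegral_sq_disk_lt_top_of_cylinder_weighted {E : Type*} [NormedAddCommGroup E]
    [MeasurableSpace E] [BorelSpace E]
    (u : ℂ → E) (hu : Measurable u) (δ : ℝ) (hδ : 0 < δ)
    (hfin : (∫⁻ p in Set.Ici (0 : ℝ) ×ˢ Set.Ico (0 : ℝ) 1,
        (‖u (Complex.exp (-(2 * Real.pi) * ((p.1 : ℂ) + (p.2 : ℂ) * Complex.I)))‖₊ : ℝ≥0∞) ^ 2 *
          ENNReal.ofReal (Real.exp (2 * δ * p.1))) < ⊤) :
    (∫⁻ z in {z : ℂ | 0 < ‖z‖ ∧ ‖z‖ ≤ 1}, (‖u z‖₊ : ℝ≥0∞) ^ 2) < ⊤ := by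
  have hπ : (0:ℝ) < Real.pi := Real.pi_pos
  set c : ℂ := -(2 * (Real.pi : ℂ)) with hc
  have hcnz : c ≠ 0 := by
    simp only [hc, neg_ne_zero, mul_ne_zero_iff]
    exact ⟨two_ne_zero, Complex.ofReal_ne_zero.2 Real.pi_ne_zero⟩
  set ψ : ℂ → ℂ := fun w => Complex.exp (c * w) with hψ
  set A : Set ℂ := Complex.measurableEquivRealProd ⁻¹' (Set.Ici (0 : ℝ) ×ˢ Set.Ico (0 : ℝ) 1)
    with hAdef
  have hmemA : ∀ w : ℂ, w ∈ A ↔ 0 ≤ w.re ∧ 0 ≤ w.im ∧ w.im < 1 := by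
    intro w
    simp [hAdef, Complex.measurableEquivRealProd_apply, Set.mem_Ici, Set.mem_Ico, and_assoc]
  have hA : MeasurableSet A :=
    Complex.measurableEquivRealProd.measurable (measurableSet_Ici.prod measurableSet_Ico)
  -- the derivative
  set f' : ℂ → (ℂ →L[ℝ] ℂ) := fun w => (c * Complex.exp (c * w)) • (1 : ℂ →L[ℝ] ℂ) with hf'
  have hder : ∀ w ∈ A, HasFDerivWithinAt ψ (f' w) A w := fun w _ =>
    (hasFDerivAt_exp_const_mul c w).hasFDerivWithinAt
  -- injectivity
  have hinj : Set.InjOn ψ A := by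
    intro w1 h1 w2 h2 heq
    rw [hmemA] at h1 h2
    rw [hψ] at heq
    simp only [Complex.exp_eq_exp_iff_exists_int] at heq
    obtain ⟨n, hn⟩ := heq
    have h4 : w1 - w2 = -(n : ℂ) * I := by
      apply mul_left_cancel₀ hcnz
      rw [hc] at hn ⊢
      linear_combination hn
    have him : w1.im - w2.im = -(n : ℝ) := by
      have := congrArg Complex.im h4
      simpa using this
    have hre : w1.re = w2.re := by
      have := congrArg Complex.re h4
      simp at this
      linarith
    have hn1 : (n : ℝ) < 1 := by linarith [h1.2.1, h2.2.2]
    have hn2 : (-1 : ℝ) < (n : ℝ) := by linarith [h1.2.2, h2.2.1]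
    have hn0 : n = 0 := by
      have a1 : n < 1 := by exact_mod_cast hn1
      have a2 : -1 < n := by exact_mod_cast hn2
      omega
    apply Complex.ext hre
    rw [hn0] at him
    simpa using sub_eq_zero.mp (by simpa using him)
  -- image
  have himg : ψ '' A = {z : ℂ | 0 < ‖z‖ ∧ ‖z‖ ≤ 1} := by
    ext z
    constructor
    · rintro ⟨w, hw, rfl⟩
      rw [hmemA] at hw
      have : ‖ψ w‖ = Real.exp ((c * w).re) := by
        rw [hψ, Complex.norm_exp]
      have hre : (c * w).re = -(2 * Real.pi) * w.re := by
        rw [hc]; simp [Complex.mul_re]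
      constructor
      · rw [this]; exact Real.exp_pos _
      · rw [this, hre]
        calc Real.exp (-(2 * Real.pi) * w.re) ≤ Real.exp 0 :=
              Real.exp_le_exp.2 (by nlinarith [hw.1])
          _ = 1 := Real.exp_zero
    · rintro ⟨hz0, hz1⟩
      have hzne : z ≠ 0 := by
        intro h; rw [h] at hz0; simp at hz0
      set s : ℝ := -(Real.log ‖z‖) / (2 * Real.pi) with hs
      set t : ℝ := Int.fract (-(Complex.arg z) / (2 * Real.pi)) with ht
      set k : ℤ := ⌊-(Complex.arg z) / (2 * Real.pi)⌋ with hk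
      have htval : t = -(Complex.arg z) / (2 * Real.pi) - k := by
        rw [ht, hk, Int.fract]
      refine ⟨(s : ℂ) + (t : ℂ) * I, ?_, ?_⟩
      · rw [hmemA]
        have hre0 : ((s : ℂ) + (t : ℂ) * I).re = s := by simp
        have him0 : ((s : ℂ) + (t : ℂ) * I).im = t := by simp
        rw [hre0, him0]
        refine ⟨?_, ?_, ?_⟩
        · have hlog : Real.log ‖z‖ ≤ 0 := Real.log_nonpos (norm_nonneg z) hz1
          rw [hs]
          apply div_nonneg (by linarith) (by positivity)
        · exact Int.fract_nonneg _
        · exact Int.fract_lt_one _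
      · -- ψ (s + t I) = z
        show Complex.exp (c * ((s : ℂ) + (t : ℂ) * I)) = z
        have hsplit : c * ((s : ℂ) + (t : ℂ) * I) = c * s + c * t * I := by ring
        rw [hsplit, Complex.exp_add]
        have e1 : Complex.exp (c * (s : ℂ)) = (‖z‖ : ℂ) := by
          have hsr : -(2 * Real.pi) * s = Real.log ‖z‖ := by
            rw [hs]; field_simp
          have harg : c * (s : ℂ) = ((Real.log ‖z‖ : ℝ) : ℂ) := by
            rw [← hsr, hc]; push_cast; ring
          rw [harg, ← Complex.ofReal_exp, Real.exp_log hz0]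
        have e2 : Complex.exp (c * (t : ℂ) * I) = Complex.exp ((Complex.arg z : ℂ) * I) := by
          have h2r : -(2 * Real.pi) * t = Complex.arg z + 2 * Real.pi * k := by
            rw [htval]; field_simp; ring
          have h2c : -(2 * (Real.pi : ℂ)) * (t : ℂ) = (Complex.arg z : ℂ) + 2 * (Real.pi : ℂ) * (k : ℂ) := by
            exact_mod_cast congrArg (fun x : ℝ => (x : ℂ)) h2r
          have harg : c * (t : ℂ) * I = (Complex.arg z : ℂ) * I + (k : ℂ) * (2 * Real.pi * I) := by
            rw [hc]; linear_combination I * h2c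
          rw [harg, Complex.exp_add, Complex.exp_int_mul_two_pi_mul_I, mul_one]
        rw [e1, e2]
        exact Complex.norm_mul_exp_arg_mul_I z
    -- change of variables
  have hcv := lintegral_image_eq_lintegral_abs_det_fderiv_mul volume hA hder hinj
      (fun z => (‖u z‖₊ : ℝ≥0∞) ^ 2)
  rw [himg] at hcv
  rw [hcv]
  -- transfer hfin to an integral over A
  have hFmeas : Measurable fun p : ℝ × ℝ =>
      (‖u (Complex.exp (-(2 * Real.pi) * ((p.1 : ℂ) + (p.2 : ℂ) * Complex.I)))‖₊ : ℝ≥0∞) ^ 2 *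
        ENNReal.ofReal (Real.exp (2 * δ * p.1)) := by
    apply Measurable.fun_mul
    · apply Measurable.pow_const
      apply Measurable.coe_nnreal_ennreal
      apply Measurable.nnnorm
      apply hu.comp
      apply Complex.measurable_exp.comp
      fun_prop
    · apply Measurable.ennreal_ofReal
      fun_prop
  have key := Complex.volume_preserving_equiv_real_prod.setLIntegral_comp_preimage
      (s := Set.Ici (0 : ℝ) ×ˢ Set.Ico (0 : ℝ) 1)
      (measurableSet_Ici.prod measurableSet_Ico) hFmeas
  rw [← hAdef] at key
  -- key : ∫⁻ w in A, F (re w, im w) = the finite integral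
  have key2 : (∫⁻ w in A, (‖u (ψ w)‖₊ : ℝ≥0∞) ^ 2 *
      ENNReal.ofReal (Real.exp (2 * δ * w.re))) < ⊤ := by
    rw [← key] at hfin
    convert hfin using 1
    apply lintegral_congr
    intro w
    simp only [Complex.measurableEquivRealProd_apply]
    rw [hψ, hc]
    norm_num [Complex.re_add_im]
  -- now bound the integrand
  have hbound : ∀ w ∈ A, ENNReal.ofReal |ContinuousLinearMap.det (f' w)| * (‖u (ψ w)‖₊ : ℝ≥0∞) ^ 2
      ≤ ENNReal.ofReal (4 * Real.pi ^ 2) *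
        ((‖u (ψ w)‖₊ : ℝ≥0∞) ^ 2 * ENNReal.ofReal (Real.exp (2 * δ * w.re))) := by
    intro w hw
    rw [hmemA] at hw
    have hdet : ContinuousLinearMap.det (f' w) =
        4 * Real.pi ^ 2 * Real.exp (2 * (-(2 * Real.pi) * w.re)) := by
      rw [hf', det_complex_smul_one, map_mul]
      have h1 : Complex.normSq c = 4 * Real.pi ^ 2 := by
        rw [hc]; simp [Complex.normSq_apply]; ring
      have h2 : Complex.normSq (Complex.exp (c * w)) = Real.exp (2 * (-(2 * Real.pi) * w.re)) := by
        rw [Complex.normSq_eq_norm_sq, Complex.norm_exp, ← Real.exp_nat_mul]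
        congr 1
        rw [hc]
        simp [Complex.mul_re]
      rw [h1, h2]
    have hdetpos : (0:ℝ) ≤ 4 * Real.pi ^ 2 * Real.exp (2 * (-(2 * Real.pi) * w.re)) := by
      positivity
    rw [hdet, _root_.abs_of_nonneg hdetpos, ENNReal.ofReal_mul (by positivity), mul_assoc]
    refine mul_le_mul_right ?_ _
    rw [mul_comm]
    refine mul_le_mul_right ?_ _
    exact ENNReal.ofReal_le_ofReal (Real.exp_le_exp.2 (by nlinarith [hw.1]))
  calc (∫⁻ w in A, ENNReal.ofReal |ContinuousLinearMap.det (f' w)| * (‖u (ψ w)‖₊ : ℝ≥0∞) ^ 2)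
      ≤ ∫⁻ w in A, ENNReal.ofReal (4 * Real.pi ^ 2) *
          ((‖u (ψ w)‖₊ : ℝ≥0∞) ^ 2 * ENNReal.ofReal (Real.exp (2 * δ * w.re))) :=
        setLIntegral_mono' hA hbound
    _ = ENNReal.ofReal (4 * Real.pi ^ 2) * ∫⁻ w in A, (‖u (ψ w)‖₊ : ℝ≥0∞) ^ 2 *
          ENNReal.ofReal (Real.exp (2 * δ * w.re)) :=
        lintegral_const_mul' _ _ ENNReal.ofReal_ne_top
    _ < ⊤ := ENNReal.mul_lt_top ENNReal.ofReal_lt_top key2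
end

section
/- Let E be a real normed vector space, define Ψ : ℂ → ℂ by Ψ(w) = exp(-2π w), and let C ≥ 0. Suppose u : ℂ → E is differentiable (over ℝ) at every point z with 0 < ‖z‖ ≤ 1, that z ↦ fderiv ℝ u z is Borel measurable there, and that ‖fderiv ℝ u z‖ ≤ C for all such z. Then for every δ with 0 < δ < 2π, ∫⁻_{w ∈ {w : Re w ≥ 0, Im w ∈ [0,1)}} (‖fderiv ℝ (u ∘ Ψ) w‖₊)² · e^{2δ Re(w)} dA(w) ≤ 4π² C² / (4π - 2δ). -/
open MeasureTheory Set Complex ENNReal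

/-- The holomorphic polar coordinate map `Ψ(w) = exp(-2πw)`. -/
noncomputable def polarCoord' : ℂ → ℂ := fun w => Complex.exp (-(2 * Real.pi) * w)

lemma polarCoord'_hasDerivAt (w : ℂ) :
    HasDerivAt polarCoord' (-(2 * Real.pi) * polarCoord' w) w := by
  have h : HasDerivAt (fun w : ℂ => -(2 * Real.pi) * w) (-(2 * Real.pi)) w := by
    simpa using (hasDerivAt_id w).const_mul (-(2 * Real.pi) : ℂ)
  have h2 := h.cexp
  show HasDerivAt (fun w : ℂ => Complex.exp (-(2 * Real.pi) * w)) _ w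
  convert h2 using 1
  show -(2 * (Real.pi : ℂ)) * polarCoord' w = _
  unfold polarCoord'
  ring
  rfl

lemma norm_polarCoord' (w : ℂ) : ‖polarCoord' w‖ = Real.exp (-(2 * Real.pi) * w.re) := by
  simp [polarCoord', Complex.norm_exp]

lemma norm_fderiv_polarCoord' (w : ℂ) :
    ‖fderiv ℝ polarCoord' w‖ = 2 * Real.pi * Real.exp (-(2 * Real.pi) * w.re) := by
  have h := ((polarCoord'_hasDerivAt w).hasFDerivAt.restrictScalars ℝ).fderiv
  rw [h, ContinuousLinearMap.norm_restrictScalars, ContinuousLinearMap.norm_toSpanSingleton]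
  simp only [norm_one, one_mul, norm_mul, norm_neg]
  rw [norm_polarCoord']
  have h2 : ‖(2 : ℂ)‖ = 2 := by norm_num
  have hπ : ‖((Real.pi : ℝ) : ℂ)‖ = Real.pi := by
    rw [Complex.norm_real]; exact abs_of_pos Real.pi_pos
  rw [h2, hπ]

lemma integral_exp_neg_mul_Ioi' {a : ℝ} (ha : 0 < a) :
    ∫ x in Ioi (0 : ℝ), Real.exp (-(a * x)) = a⁻¹ := by
  have h := integral_comp_mul_right_Ioi (fun x => Real.exp (-x)) 0 ha
  simp only [zero_mul, smul_eq_mul, integral_exp_neg_Ioi_zero, mul_one] at h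
  rw [← h]
  congr 1; ext x; rw [mul_comm]

/-- First-derivative weighted estimate in holomorphic polar coordinates: if
`‖Du‖ ≤ C` on the punctured unit disk, then for `0 < δ < 2π`,
`∫_{strip} ‖D(u∘Ψ)(w)‖² e^{2δ Re w} dA(w) ≤ 4π²C²/(4π - 2δ)`. -/
theorem lintegral_fderiv_sq_strip_weighted_le {E : Type*} [NormedAddCommGroup E]
    [NormedSpace ℝ E] [MeasurableSpace (ℂ →L[ℝ] E)] [BorelSpace (ℂ →L[ℝ] E)]
    (C : ℝ) (hC : 0 ≤ C) (u : ℂ → E)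
    (hdiff : ∀ z : ℂ, 0 < ‖z‖ → ‖z‖ ≤ 1 → DifferentiableAt ℝ u z)
    (hmeas : Measurable (({z : ℂ | 0 < ‖z‖ ∧ ‖z‖ ≤ 1}).restrict fun z => fderiv ℝ u z))
    (hbound : ∀ z : ℂ, 0 < ‖z‖ → ‖z‖ ≤ 1 → ‖fderiv ℝ u z‖ ≤ C)
    (δ : ℝ) (hδ0 : 0 < δ) (hδ : δ < 2 * Real.pi) :
    (∫⁻ w in {w : ℂ | 0 ≤ w.re ∧ w.im ∈ Set.Ico (0 : ℝ) 1},
        (‖fderiv ℝ (u ∘ polarCoord') w‖₊ : ℝ≥0∞) ^ 2 *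
          ENNReal.ofReal (Real.exp (2 * δ * w.re))) ≤
      ENNReal.ofReal (4 * Real.pi ^ 2 * C ^ 2 / (4 * Real.pi - 2 * δ)) := by
  set a : ℝ := 4 * Real.pi - 2 * δ with ha_def
  have ha : 0 < a := by dsimp [a]; linarith
  set K : ℝ := 4 * Real.pi ^ 2 * C ^ 2 with hK_def
  have hK : 0 ≤ K := by positivity
  set S : Set ℂ := {w : ℂ | 0 ≤ w.re ∧ w.im ∈ Set.Ico (0 : ℝ) 1} with hS_def
  have hS : S = Complex.measurableEquivRealProd ⁻¹' (Ici (0 : ℝ) ×ˢ Ico (0 : ℝ) 1) := by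
    ext w
    simp [hS_def, Complex.measurableEquivRealProd_apply, Set.mem_prod]
  have hSmeas : MeasurableSet S := by
    rw [hS]
    exact Complex.measurableEquivRealProd.measurable
      (measurableSet_Ici.prod measurableSet_Ico)
  -- pointwise bound on S
  have hpt : ∀ w ∈ S,
      (‖fderiv ℝ (u ∘ polarCoord') w‖₊ : ℝ≥0∞) ^ 2 *
          ENNReal.ofReal (Real.exp (2 * δ * w.re)) ≤
        ENNReal.ofReal (K * Real.exp (-(a * w.re))) := by
    intro w hw
    have hwre : 0 ≤ w.re := hw.1
    set z := polarCoord' w with hz_def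
    have hz0 : 0 < ‖z‖ := by rw [hz_def, norm_polarCoord']; exact Real.exp_pos _
    have hz1 : ‖z‖ ≤ 1 := by
      rw [hz_def, norm_polarCoord']
      have : -(2 * Real.pi) * w.re ≤ 0 := by nlinarith [Real.pi_pos]
      simpa using Real.exp_le_one_iff.mpr this
    have hΨ : DifferentiableAt ℝ polarCoord' w :=
      ((polarCoord'_hasDerivAt w).hasFDerivAt.restrictScalars ℝ).differentiableAt
    have hcomp : fderiv ℝ (u ∘ polarCoord') w =
        (fderiv ℝ u z).comp (fderiv ℝ polarCoord' w) :=
      fderiv_comp w (hdiff z hz0 hz1) hΨ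
    have hnorm : ‖fderiv ℝ (u ∘ polarCoord') w‖ ≤
        C * (2 * Real.pi * Real.exp (-(2 * Real.pi) * w.re)) := by
      rw [hcomp]
      calc ‖(fderiv ℝ u z).comp (fderiv ℝ polarCoord' w)‖
          ≤ ‖fderiv ℝ u z‖ * ‖fderiv ℝ polarCoord' w‖ :=
            ContinuousLinearMap.opNorm_comp_le _ _
        _ ≤ C * (2 * Real.pi * Real.exp (-(2 * Real.pi) * w.re)) := by
            rw [norm_fderiv_polarCoord']
            exact mul_le_mul_of_nonneg_right (hbound z hz0 hz1) (by positivity)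
    have hB : (0 : ℝ) ≤ C * (2 * Real.pi * Real.exp (-(2 * Real.pi) * w.re)) := by positivity
    have e1 : Real.exp (-(2 * Real.pi) * w.re) ^ 2 * Real.exp (2 * δ * w.re) =
        Real.exp (-(a * w.re)) := by
      rw [sq, ← Real.exp_add, ← Real.exp_add]
      congr 1
      rw [ha_def]; ring
    have heq : (C * (2 * Real.pi * Real.exp (-(2 * Real.pi) * w.re))) ^ 2 *
        Real.exp (2 * δ * w.re) = K * Real.exp (-(a * w.re)) := by
      calc (C * (2 * Real.pi * Real.exp (-(2 * Real.pi) * w.re))) ^ 2 *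
            Real.exp (2 * δ * w.re)
          = (C ^ 2 * (2 * Real.pi) ^ 2) *
              (Real.exp (-(2 * Real.pi) * w.re) ^ 2 * Real.exp (2 * δ * w.re)) := by ring
        _ = (C ^ 2 * (2 * Real.pi) ^ 2) * Real.exp (-(a * w.re)) := by rw [e1]
        _ = K * Real.exp (-(a * w.re)) := by rw [hK_def]; ring
    calc (‖fderiv ℝ (u ∘ polarCoord') w‖₊ : ℝ≥0∞) ^ 2 *
          ENNReal.ofReal (Real.exp (2 * δ * w.re))
        = ENNReal.ofReal (‖fderiv ℝ (u ∘ polarCoord') w‖ ^ 2 * Real.exp (2 * δ * w.re)) := by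
          rw [ENNReal.ofReal_mul (by positivity), ENNReal.ofReal_pow (norm_nonneg _),
            ofReal_norm, enorm_eq_nnnorm]
      _ ≤ ENNReal.ofReal ((C * (2 * Real.pi * Real.exp (-(2 * Real.pi) * w.re))) ^ 2 *
            Real.exp (2 * δ * w.re)) := by
          apply ENNReal.ofReal_le_ofReal
          exact mul_le_mul_of_nonneg_right
            (pow_le_pow_left₀ (norm_nonneg _) hnorm 2) (Real.exp_pos _).le
      _ = ENNReal.ofReal (K * Real.exp (-(a * w.re))) := by rw [heq]
  refine le_trans (setLIntegral_mono' hSmeas hpt) ?_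
  -- compute the integral of the bound
  have hfm : Measurable fun p : ℝ × ℝ => ENNReal.ofReal (K * Real.exp (-(a * p.1))) := by
    fun_prop
  have h1 : (∫⁻ w in S, ENNReal.ofReal (K * Real.exp (-(a * w.re)))) =
      ∫⁻ p in Ici (0 : ℝ) ×ˢ Ico (0 : ℝ) 1,
        ENNReal.ofReal (K * Real.exp (-(a * p.1))) := by
    rw [hS]
    exact MeasurePreserving.setLIntegral_comp_preimage_emb
      Complex.volume_preserving_equiv_real_prod
      Complex.measurableEquivRealProd.measurableEmbedding
      (fun p => ENNReal.ofReal (K * Real.exp (-(a * p.1)))) (Ici (0 : ℝ) ×ˢ Ico (0 : ℝ) 1)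
  rw [h1]
  have h2 : (∫⁻ p in Ici (0 : ℝ) ×ˢ Ico (0 : ℝ) 1,
      ENNReal.ofReal (K * Real.exp (-(a * p.1)))) =
      ∫⁻ x in Ici (0 : ℝ), ∫⁻ _ in Ico (0 : ℝ) 1,
        ENNReal.ofReal (K * Real.exp (-(a * x))) := by
    rw [Measure.volume_eq_prod, ← Measure.prod_restrict]
    exact lintegral_prod _ hfm.aemeasurable
  rw [h2]
  have h3 : ∀ x : ℝ, (∫⁻ _ in Ico (0 : ℝ) 1,
      ENNReal.ofReal (K * Real.exp (-(a * x)))) =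
      ENNReal.ofReal (K * Real.exp (-(a * x))) := by
    intro x
    rw [setLIntegral_const, Real.volume_Ico]
    norm_num
  simp_rw [h3]
  rw [setLIntegral_congr (Ioi_ae_eq_Ici (μ := volume) (a := (0:ℝ))).symm]
  have hint : IntegrableOn (fun x => K * Real.exp (-(a * x))) (Ioi (0 : ℝ)) := by
    have := (exp_neg_integrableOn_Ioi 0 ha).const_mul K
    simpa [neg_mul, IntegrableOn] using this
  rw [← ofReal_integral_eq_lintegral_ofReal hint (ae_of_all _ fun x => by positivity)]
  rw [integral_const_mul, integral_exp_neg_mul_Ioi' ha]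
  apply ENNReal.ofReal_le_ofReal
  rw [div_eq_mul_inv]
end

section
/- Let k be a commutative ring and let V and W be k-modules. Let J, J' : V →ₗ[k] V be linear endomorphisms with J ∘ J = -id and J' ∘ J' = -id, suppose J + J' is invertible (a unit of the endomorphism ring of V), and set S = (J+J')⁻¹ ∘ (J' - J). Let j : W →ₗ[k] W and A : W →ₗ[k] V be linear maps satisfying J ∘ A = - (A ∘ j). Then J' ∘ ((id - S) ∘ A) = - (((id - S) ∘ A) ∘ j). -/
/-- Transport of `(J, j)`-complex antilinear maps: if `J² = J'² = -id`,
`J + J'` is invertible with inverse `T`, `S = T ∘ (J' - J)`, and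
`J ∘ A = -(A ∘ j)`, then `J' ∘ ((id - S) ∘ A) = -(((id - S) ∘ A) ∘ j)`. -/
theorem transport_antilinear {k : Type*} [CommRing k] {V W : Type*}
    [AddCommGroup V] [Module k V] [AddCommGroup W] [Module k W]
    (J J' T : V →ₗ[k] V)
    (hJ : J ∘ₗ J = -LinearMap.id) (hJ' : J' ∘ₗ J' = -LinearMap.id)
    (hT1 : T ∘ₗ (J + J') = LinearMap.id) (hT2 : (J + J') ∘ₗ T = LinearMap.id)
    (j : W →ₗ[k] W) (A : W →ₗ[k] V)
    (hA : J ∘ₗ A = -(A ∘ₗ j)) :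
    J' ∘ₗ ((LinearMap.id - T ∘ₗ (J' - J)) ∘ₗ A) =
      -(((LinearMap.id - T ∘ₗ (J' - J)) ∘ₗ A) ∘ₗ j) := by
  have hAj : A ∘ₗ j = -(J ∘ₗ A) := by rw [hA, neg_neg]
  have hAjj : (A ∘ₗ j) ∘ₗ j = -A := by
    calc (A ∘ₗ j) ∘ₗ j = (-(J ∘ₗ A)) ∘ₗ j := by rw [hAj]
    _ = -(J ∘ₗ (A ∘ₗ j)) := by rw [LinearMap.neg_comp, LinearMap.comp_assoc]
    _ = -(J ∘ₗ (-(J ∘ₗ A))) := by rw [hAj]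
    _ = (J ∘ₗ J) ∘ₗ A := by rw [LinearMap.comp_neg, neg_neg, LinearMap.comp_assoc]
    _ = -A := by rw [hJ, LinearMap.neg_comp, LinearMap.id_comp]
  have key : J ∘ₗ (J + J') = (J + J') ∘ₗ J' := by
    rw [LinearMap.comp_add, LinearMap.add_comp, hJ, hJ']
    abel
  have hJT : J' ∘ₗ T = T ∘ₗ J := by
    calc J' ∘ₗ T = (T ∘ₗ (J + J')) ∘ₗ (J' ∘ₗ T) := by rw [hT1, LinearMap.id_comp]
    _ = T ∘ₗ (((J + J') ∘ₗ J') ∘ₗ T) := by rw [LinearMap.comp_assoc, LinearMap.comp_assoc]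
    _ = T ∘ₗ ((J ∘ₗ (J + J')) ∘ₗ T) := by rw [key]
    _ = T ∘ₗ (J ∘ₗ ((J + J') ∘ₗ T)) := by rw [LinearMap.comp_assoc]
    _ = T ∘ₗ J := by rw [hT2, LinearMap.comp_id]
  have hS : LinearMap.id - T ∘ₗ (J' - J) = T ∘ₗ J + T ∘ₗ J := by
    rw [← hT1]
    simp only [LinearMap.comp_sub, LinearMap.comp_add]
    abel
  have hTJA : (T ∘ₗ J) ∘ₗ A = -(T ∘ₗ (A ∘ₗ j)) := by
    rw [LinearMap.comp_assoc, hA, LinearMap.comp_neg]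
  have hL : J' ∘ₗ (T ∘ₗ (A ∘ₗ j)) = T ∘ₗ A := by
    calc J' ∘ₗ (T ∘ₗ (A ∘ₗ j)) = (J' ∘ₗ T) ∘ₗ (A ∘ₗ j) := by rw [LinearMap.comp_assoc]
    _ = (T ∘ₗ J) ∘ₗ (A ∘ₗ j) := by rw [hJT]
    _ = T ∘ₗ ((J ∘ₗ A) ∘ₗ j) := by rw [LinearMap.comp_assoc, LinearMap.comp_assoc]
    _ = T ∘ₗ (-((A ∘ₗ j) ∘ₗ j)) := by rw [hA, LinearMap.neg_comp]
    _ = T ∘ₗ A := by rw [hAjj, neg_neg]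
  have hR : (T ∘ₗ (A ∘ₗ j)) ∘ₗ j = -(T ∘ₗ A) := by
    rw [LinearMap.comp_assoc, hAjj, LinearMap.comp_neg]
  rw [hS, LinearMap.add_comp, hTJA]
  simp only [LinearMap.comp_add, LinearMap.comp_neg, LinearMap.add_comp,
    LinearMap.neg_comp, hL, hR]
  abel
end

section
/- Let k be a commutative ring and let V and W be k-modules. Let J, J' : V →ₗ[k] V be linear endomorphisms with J ∘ J = -id and J' ∘ J' = -id, suppose J + J' is invertible (a unit of the endomorphism ring of V), and set S = (J+J')⁻¹ ∘ (J' - J). Let j : W →ₗ[k] W and A : W →ₗ[k] V be linear maps satisfying J ∘ A = A ∘ j. Then J' ∘ ((id - S) ∘ A) = ((id - S) ∘ A) ∘ j. -/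
/-- Transport of `(J, j)`-complex linear maps: if `J² = J'² = -id`,
`J + J'` is invertible with inverse `T`, `S = T ∘ (J' - J)`, and
`J ∘ A = A ∘ j`, then `J' ∘ ((id - S) ∘ A) = ((id - S) ∘ A) ∘ j`. -/
theorem transport_linear {k : Type*} [CommRing k] {V W : Type*}
    [AddCommGroup V] [Module k V] [AddCommGroup W] [Module k W]
    (J J' T : V →ₗ[k] V)
    (hJ : J ∘ₗ J = -LinearMap.id) (hJ' : J' ∘ₗ J' = -LinearMap.id)
    (hT1 : T ∘ₗ (J + J') = LinearMap.id) (hT2 : (J + J') ∘ₗ T = LinearMap.id)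
    (j : W →ₗ[k] W) (A : W →ₗ[k] V)
    (hA : J ∘ₗ A = A ∘ₗ j) :
    J' ∘ₗ ((LinearMap.id - T ∘ₗ (J' - J)) ∘ₗ A) =
      ((LinearMap.id - T ∘ₗ (J' - J)) ∘ₗ A) ∘ₗ j := by
  have h1 : J ∘ₗ (J + J') = (J + J') ∘ₗ J' := by
    simp only [LinearMap.comp_add, LinearMap.add_comp, hJ, hJ']
    abel
  have h2 : J' ∘ₗ T = T ∘ₗ J := by
    calc J' ∘ₗ T = (T ∘ₗ (J + J')) ∘ₗ (J' ∘ₗ T) := by rw [hT1, LinearMap.id_comp]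
    _ = T ∘ₗ (((J + J') ∘ₗ J') ∘ₗ T) := by
        simp only [LinearMap.comp_assoc]
    _ = T ∘ₗ (J ∘ₗ ((J + J') ∘ₗ T)) := by
        rw [← h1]; simp only [LinearMap.comp_assoc]
    _ = T ∘ₗ J := by rw [hT2, LinearMap.comp_id]
  have h3 : LinearMap.id - T ∘ₗ (J' - J) = T ∘ₗ (J + J) := by
    rw [← hT1, ← LinearMap.comp_sub]
    congr 1
    abel
  rw [h3]
  calc J' ∘ₗ ((T ∘ₗ (J + J)) ∘ₗ A)
      = (J' ∘ₗ T) ∘ₗ ((J + J) ∘ₗ A) := by simp only [LinearMap.comp_assoc]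
    _ = T ∘ₗ ((J + J) ∘ₗ (J ∘ₗ A)) := by
        rw [h2]
        simp only [LinearMap.comp_assoc, LinearMap.add_comp, LinearMap.comp_add]
    _ = ((T ∘ₗ (J + J)) ∘ₗ A) ∘ₗ j := by
        rw [hA]; simp only [LinearMap.comp_assoc]
end
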